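/- Correctness of the naive algorithm: let p ∈ ℝ[x] and m ≥ 0. Suppose (𝓛⁽ʲ⁾(p))(v₀) = 0 for every 0 ≤ j ≤ m, and that 𝓛⁽ᵐ⁺¹⁾(p) lies in the ideal I_m of ℝ[x] generated by {𝓛⁽⁰⁾(p), 𝓛⁽¹⁾(p), …, 𝓛⁽ᵐ⁾(p)}. Then I_m is a Φ-invariant and it is the smallest Φ-invariant containing p; in particular 𝓛⁽ʲ⁾(p) ∈ I_m for every j ≥ 0, and p ∈ Z_Φ. -/

import Mathlib

open MvPolynomial

/-- The Lie derivative of a polynomial along the polynomial vector field `F`. -/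
noncomputable def lieDeriv {N : ℕ} (F : Fin N → MvPolynomial (Fin N) ℝ)
    (p : MvPolynomial (Fin N) ℝ) : MvPolynomial (Fin N) ℝ :=
  ∑ i, pderiv i p * F i

/-- `I` is a `Φ`-invariant ideal: every element vanishes at `v₀` and `I` is closed
under Lie derivation. -/
def IsInvariantIdeal {N : ℕ} (F : Fin N → MvPolynomial (Fin N) ℝ) (v₀ : Fin N → ℝ)
    (I : Ideal (MvPolynomial (Fin N) ℝ)) : Prop :=
  (∀ p ∈ I, eval v₀ p = 0) ∧ ∀ p ∈ I, lieDeriv F p ∈ I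

/-- `Z_Φ`: the set of polynomials whose induced behaviour vanishes identically on `D`. -/
def Zset {N : ℕ} (x : ℝ → Fin N → ℝ) (D : Set ℝ) : Set (MvPolynomial (Fin N) ℝ) :=
  {p | ∀ t ∈ D, eval (x t) p = 0}

lemma lieDeriv_add {N : ℕ} (F : Fin N → MvPolynomial (Fin N) ℝ)
    (p q : MvPolynomial (Fin N) ℝ) :
    lieDeriv F (p + q) = lieDeriv F p + lieDeriv F q := by
  simp [lieDeriv, add_mul, Finset.sum_add_distrib]

lemma lieDeriv_mul {N : ℕ} (F : Fin N → MvPolynomial (Fin N) ℝ)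
    (p q : MvPolynomial (Fin N) ℝ) :
    lieDeriv F (p * q) = lieDeriv F p * q + p * lieDeriv F q := by
  simp only [lieDeriv, pderiv_mul]
  rw [Finset.mul_sum, Finset.sum_mul, ← Finset.sum_add_distrib]
  congr 1; ext i; ring

lemma lieDeriv_C {N : ℕ} (F : Fin N → MvPolynomial (Fin N) ℝ) (a : ℝ) :
    lieDeriv F (C a) = 0 := by
  simp [lieDeriv]

lemma lieDeriv_X {N : ℕ} (F : Fin N → MvPolynomial (Fin N) ℝ) (i : Fin N) :
    lieDeriv F (X i) = F i := by
  simp [lieDeriv, pderiv_X, Pi.single_apply]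

lemma evalx_analytic {N : ℕ} {x : ℝ → Fin N → ℝ} {D : Set ℝ}
    (han : ∀ i, AnalyticOnNhd ℝ (fun t => x t i) D)
    (q : MvPolynomial (Fin N) ℝ) :
    AnalyticOnNhd ℝ (fun t => eval (x t) q) D := by
  induction q using MvPolynomial.induction_on with
  | C a => simpa using analyticOnNhd_const
  | add p q hp hq => simpa [map_add, Pi.add_def] using hp.add hq
  | mul_X p i hp => simpa [map_mul] using hp.mul (han i)

lemma evalx_hasDerivAt {N : ℕ} {F : Fin N → MvPolynomial (Fin N) ℝ}
    {x : ℝ → Fin N → ℝ} {D : Set ℝ}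
    (hsol : ∀ t ∈ D, HasDerivAt x (fun i => eval (x t) (F i)) t)
    (q : MvPolynomial (Fin N) ℝ) {t : ℝ} (ht : t ∈ D) :
    HasDerivAt (fun s => eval (x s) q) (eval (x t) (lieDeriv F q)) t := by
  induction q using MvPolynomial.induction_on with
  | C a => simpa [lieDeriv_C] using hasDerivAt_const t (a : ℝ)
  | add p q hp hq => simpa [map_add, lieDeriv_add, Pi.add_def] using hp.add hq
  | mul_X p i hp =>
      have hxi : HasDerivAt (fun s => x s i) (eval (x t) (F i)) t := by
        have := (hsol t ht)
        have h2 := ((ContinuousLinearMap.proj i :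
          (Fin N → ℝ) →L[ℝ] ℝ).hasFDerivAt).comp_hasDerivAt t this.hasFDerivAt
        simpa [Function.comp_def] using h2
      have := hp.mul hxi
      simp only [map_mul, lieDeriv_mul, lieDeriv_X, map_add, eval_X]
      exact this

/-- correctness of the naive algorithm: if `(𝓛⁽ʲ⁾p)(v₀) = 0` for all
`j ≤ m` and `𝓛⁽ᵐ⁺¹⁾p` lies in the ideal `I_m` generated by `{𝓛⁽⁰⁾p, …, 𝓛⁽ᵐ⁾p}`,
then `I_m` is the smallest `Φ`-invariant containing `p`; in particular
`𝓛⁽ʲ⁾p ∈ I_m` for all `j` and `p ∈ Z_Φ`. -/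
theorem stmt8
    (N : ℕ) (hN : 1 ≤ N)
    (F : Fin N → MvPolynomial (Fin N) ℝ) (v₀ : Fin N → ℝ)
    (D : Set ℝ) (hD : IsOpen D) (hDc : D.OrdConnected) (h0 : (0 : ℝ) ∈ D)
    (x : ℝ → Fin N → ℝ)
    (hsol : ∀ t ∈ D, HasDerivAt x (fun i => eval (x t) (F i)) t)
    (hx0 : x 0 = v₀)
    (han : ∀ i, AnalyticOnNhd ℝ (fun t => x t i) D)
    (p : MvPolynomial (Fin N) ℝ) (m : ℕ)
    (hvanish : ∀ j ≤ m, eval v₀ ((lieDeriv F)^[j] p) = 0)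
    (hmem : (lieDeriv F)^[m + 1] p ∈
      Ideal.span {q | ∃ j ≤ m, q = (lieDeriv F)^[j] p}) :
    IsInvariantIdeal F v₀ (Ideal.span {q | ∃ j ≤ m, q = (lieDeriv F)^[j] p}) ∧
    p ∈ Ideal.span {q | ∃ j ≤ m, q = (lieDeriv F)^[j] p} ∧
    (∀ J : Ideal (MvPolynomial (Fin N) ℝ), IsInvariantIdeal F v₀ J → p ∈ J →
      Ideal.span {q | ∃ j ≤ m, q = (lieDeriv F)^[j] p} ≤ J) ∧
    (∀ j : ℕ, (lieDeriv F)^[j] p ∈ Ideal.span {q | ∃ j ≤ m, q = (lieDeriv F)^[j] p}) ∧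
    p ∈ Zset x D := by
  set S : Set (MvPolynomial (Fin N) ℝ) := {q | ∃ j ≤ m, q = (lieDeriv F)^[j] p} with hS
  set I : Ideal (MvPolynomial (Fin N) ℝ) := Ideal.span S with hI
  have hgen : ∀ j ≤ m, (lieDeriv F)^[j] p ∈ I := fun j hj =>
    Ideal.subset_span ⟨j, hj, rfl⟩
  have hclosed_gen : ∀ q ∈ S, lieDeriv F q ∈ I := by
    rintro q ⟨j, hj, rfl⟩
    rw [show lieDeriv F ((lieDeriv F)^[j] p) = (lieDeriv F)^[j + 1] p from
      (Function.iterate_succ_apply' _ _ _).symm]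
    rcases eq_or_lt_of_le hj with h | h
    · subst h; exact hmem
    · exact hgen (j + 1) h
  have hclosed : ∀ q ∈ I, lieDeriv F q ∈ I := by
    intro q hq
    refine Submodule.span_induction (p := fun q _ => lieDeriv F q ∈ I)
      hclosed_gen ?_ ?_ ?_ hq
    · simp [lieDeriv]
    · intro a b _ _ ha hb
      rw [lieDeriv_add]; exact I.add_mem ha hb
    · intro a q hq ih
      rw [smul_eq_mul, lieDeriv_mul]
      exact I.add_mem (I.mul_mem_left _ hq) (I.mul_mem_left _ ih)
  have hvan : ∀ q ∈ I, eval v₀ q = 0 := by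
    intro q hq
    have hle : I ≤ RingHom.ker (eval v₀ : MvPolynomial (Fin N) ℝ →+* ℝ) := by
      rw [hI, Ideal.span_le]
      rintro q ⟨j, hj, rfl⟩
      exact hvanish j hj
    exact hle hq
  have hp : p ∈ I := hgen 0 (Nat.zero_le m)
  have hallj : ∀ j, (lieDeriv F)^[j] p ∈ I := by
    intro j
    induction j with
    | zero => exact hp
    | succ n ih => rw [Function.iterate_succ_apply']; exact hclosed _ ih
  refine ⟨⟨hvan, hclosed⟩, hp, ?_, hallj, ?_⟩
  · intro J hJ hpJ
    have hJall : ∀ j, (lieDeriv F)^[j] p ∈ J := by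
      intro j
      induction j with
      | zero => exact hpJ
      | succ n ih => rw [Function.iterate_succ_apply']; exact hJ.2 _ ih
    rw [hI, Ideal.span_le]
    rintro q ⟨j, _, rfl⟩
    exact hJall j
  · -- p ∈ Zset x D
    set g : ℝ → ℝ := fun t => eval (x t) p with hg
    have hganal : AnalyticOnNhd ℝ g D := evalx_analytic han p
    have hiter : ∀ n, Set.EqOn (iteratedDeriv n g)
        (fun t => eval (x t) ((lieDeriv F)^[n] p)) D := by
      intro n
      induction n with
      | zero => intro t ht; simp [iteratedDeriv_zero, hg]
      | succ n ih =>
        intro t ht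
        rw [iteratedDeriv_succ]
        have hev : iteratedDeriv n g =ᶠ[nhds t]
            fun s => eval (x s) ((lieDeriv F)^[n] p) :=
          Filter.eventuallyEq_of_mem (hD.mem_nhds ht) ih
        rw [hev.deriv_eq, Function.iterate_succ_apply']
        exact (evalx_hasDerivAt hsol _ ht).deriv
    have hder0 : ∀ n, iteratedDeriv n g 0 = 0 := by
      intro n
      rw [hiter n h0]
      simp only
      rw [hx0]
      exact hvan _ (hallj n)
    obtain ⟨ps, hps⟩ := hganal 0 h0
    obtain ⟨r, hr⟩ := hps
    have hzero : ∀ y ∈ EMetric.ball (0 : ℝ) r, g (0 + y) = 0 := by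
      intro y hy
      have hs := hr.hasSum_iteratedFDeriv hy
      have hterm : (fun n : ℕ => ((n.factorial : ℝ))⁻¹ • iteratedFDeriv ℝ n g 0 (fun _ => y))
          = fun _ : ℕ => (0 : ℝ) := by
        funext n
        rw [iteratedFDeriv_apply_eq_iteratedDeriv_mul_prod, hder0 n]
        simp
      exact hs.unique (by rw [hterm]; exact hasSum_zero)
    have hev0 : g =ᶠ[nhds 0] 0 := by
      have hball : EMetric.ball (0 : ℝ) r ∈ nhds 0 := EMetric.ball_mem_nhds _ hr.r_pos
      filter_upwards [hball] with y hy
      simpa using hzero y hy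
    intro t ht
    exact hganal.eqOn_zero_of_preconnected_of_eventuallyEq_zero
      hDc.isPreconnected h0 hev0 ht
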